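/- arXiv:0810.5148 — 6 statements merged into one kernel-verified Lean document; each statement's English description precedes it below -/
import Mathlib

section
/- Jensen's inequality for the matrix inverse under integration: if Σ : [0,T] → Sⁿ₊₊ is continuous with values in symmetric positive definite matrices, then ((1/T)∫₀ᵀ Σ(t) dt)⁻¹ ⪯ (1/T)∫₀ᵀ Σ(t)⁻¹ dt. -/
open Matrix

namespace JensenInverseAux

open MeasureTheory

lemma quad_contOn {n : ℕ} (M : ℝ → Matrix (Fin n) (Fin n) ℝ) (s : Set ℝ)
    (h : ∀ i j, ContinuousOn (fun t => M t i j) s) (x y : Fin n → ℝ) :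
    ContinuousOn (fun t => x ⬝ᵥ (M t) *ᵥ y) s := by
  show ContinuousOn (fun t => ∑ i, x i * ∑ j, M t i j * y j) s
  refine continuousOn_finset_sum _ fun i _ => ContinuousOn.mul continuousOn_const ?_
  exact continuousOn_finset_sum _ fun j _ => (h i j).mul continuousOn_const

lemma dot_integral {n : ℕ} (T : ℝ) (M : ℝ → Matrix (Fin n) (Fin n) ℝ)
    (hM : ∀ i j, IntervalIntegrable (fun t => M t i j) volume 0 T) (x y : Fin n → ℝ) :
    x ⬝ᵥ (Matrix.of fun i j => ∫ t in (0:ℝ)..T, M t i j) *ᵥ y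
      = ∫ t in (0:ℝ)..T, x ⬝ᵥ (M t) *ᵥ y := by
  have hint : ∀ i j, IntervalIntegrable (fun t => x i * (M t i j * y j)) volume 0 T :=
    fun i j => ((hM i j).mul_const _).const_mul _
  have hsum : ∀ i, IntervalIntegrable (fun t => ∑ j, x i * (M t i j * y j)) volume 0 T := by
    intro i
    have := IntervalIntegrable.sum (μ := volume) (a := 0) (b := T) Finset.univ
      (f := fun j t => x i * (M t i j * y j)) (fun j _ => hint i j)
    have heq : (fun t => ∑ j, x i * (M t i j * y j))
        = ∑ j : Fin n, fun t => x i * (M t i j * y j) := by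
      ext t; simp
    rw [heq]; exact this
  have lhs : x ⬝ᵥ (Matrix.of fun i j => ∫ t in (0:ℝ)..T, M t i j) *ᵥ y
      = ∑ i, ∑ j, x i * ((∫ t in (0:ℝ)..T, M t i j) * y j) := by
    simp [dotProduct, Matrix.mulVec, Finset.mul_sum]
  rw [lhs]
  have e1 : ∀ i j, (∫ t in (0:ℝ)..T, x i * (M t i j * y j))
      = x i * ((∫ t in (0:ℝ)..T, M t i j) * y j) := by
    intro i j
    rw [intervalIntegral.integral_const_mul, intervalIntegral.integral_mul_const]
  calc ∑ i, ∑ j, x i * ((∫ t in (0:ℝ)..T, M t i j) * y j)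
      = ∑ i, ∫ t in (0:ℝ)..T, ∑ j, x i * (M t i j * y j) := by
        refine Finset.sum_congr rfl fun i _ => ?_
        rw [intervalIntegral.integral_finset_sum (fun j _ => hint i j)]
        exact Finset.sum_congr rfl fun j _ => (e1 i j).symm
    _ = ∫ t in (0:ℝ)..T, ∑ i, ∑ j, x i * (M t i j * y j) :=
        (intervalIntegral.integral_finset_sum (fun i _ => hsum i)).symm
    _ = ∫ t in (0:ℝ)..T, x ⬝ᵥ (M t) *ᵥ y := by
        refine intervalIntegral.integral_congr fun t _ => ?_
        simp [dotProduct, Matrix.mulVec, Finset.mul_sum]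

end JensenInverseAux

open JensenInverseAux MeasureTheory

theorem jensen_inverse_integral (n : ℕ) (T : ℝ) (hT : 0 < T)
    (Sig : ℝ → Matrix (Fin n) (Fin n) ℝ)
    (hcont : ∀ i j, ContinuousOn (fun t => Sig t i j) (Set.Icc 0 T))
    (hpos : ∀ t ∈ Set.Icc (0:ℝ) T, (Sig t).PosDef) :
    ((T⁻¹ • (Matrix.of fun i j => ∫ t in (0:ℝ)..T, (Sig t)⁻¹ i j))
      - (T⁻¹ • (Matrix.of fun i j => ∫ t in (0:ℝ)..T, Sig t i j))⁻¹).PosSemidef := by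
  have hIcc : Set.uIcc (0:ℝ) T = Set.Icc 0 T := Set.uIcc_of_le hT.le
  -- continuity of the inverse entries
  have hcontM : ContinuousOn Sig (Set.Icc 0 T) := by
    exact continuousOn_pi.mpr fun i => continuousOn_pi.mpr fun j => hcont i j
  have hdet : ContinuousOn (fun t => (Sig t).det) (Set.Icc 0 T) :=
    (Continuous.matrix_det continuous_id).comp_continuousOn hcontM
  have hdetne : ∀ t ∈ Set.Icc (0:ℝ) T, (Sig t).det ≠ 0 := fun t ht => (hpos t ht).det_pos.ne'
  have hadj : ContinuousOn (fun t => (Sig t).adjugate) (Set.Icc 0 T) :=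
    (Continuous.matrix_adjugate continuous_id).comp_continuousOn hcontM
  have hcontInv : ∀ i j, ContinuousOn (fun t => (Sig t)⁻¹ i j) (Set.Icc 0 T) := by
    intro i j
    have h2 : ContinuousOn (fun t => (Sig t).adjugate i j) (Set.Icc 0 T) :=
      (continuous_apply j).comp_continuousOn ((continuous_apply i).comp_continuousOn hadj)
    have h1 : ContinuousOn (fun t => (Sig t).det⁻¹ * (Sig t).adjugate i j) (Set.Icc 0 T) :=
      (hdet.inv₀ hdetne).mul h2
    refine h1.congr fun t ht => ?_
    rw [Matrix.inv_def, Ring.inverse_eq_inv']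
    simp [Matrix.smul_apply]
  -- integrability
  have hII : ∀ (f : ℝ → ℝ), ContinuousOn f (Set.Icc 0 T) → IntervalIntegrable f volume 0 T := by
    intro f hf
    exact (hIcc ▸ hf : ContinuousOn f (Set.uIcc 0 T)).intervalIntegrable
  have hintS : ∀ i j, IntervalIntegrable (fun t => Sig t i j) volume 0 T :=
    fun i j => hII _ (hcont i j)
  have hintInv : ∀ i j, IntervalIntegrable (fun t => (Sig t)⁻¹ i j) volume 0 T :=
    fun i j => hII _ (hcontInv i j)
  -- entry symmetry facts
  have symmS : ∀ t ∈ Set.Icc (0:ℝ) T, ∀ i j, Sig t j i = Sig t i j := by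
    intro t ht i j
    have h := (hpos t ht).isHermitian
    conv_lhs => rw [← h]
    simp [Matrix.conjTranspose_apply]
  have symmInv : ∀ t ∈ Set.Icc (0:ℝ) T, ∀ i j, (Sig t)⁻¹ j i = (Sig t)⁻¹ i j := by
    intro t ht i j
    have h := (hpos t ht).inv.isHermitian
    conv_lhs => rw [← h]
    simp [Matrix.conjTranspose_apply]
  set MS : Matrix (Fin n) (Fin n) ℝ := Matrix.of fun i j => ∫ t in (0:ℝ)..T, Sig t i j with hMS
  set MI : Matrix (Fin n) (Fin n) ℝ := Matrix.of fun i j => ∫ t in (0:ℝ)..T, (Sig t)⁻¹ i j with hMI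
  have hermMS : MS.IsHermitian := by
    show MSᴴ = MS
    ext i j
    simp only [Matrix.conjTranspose_apply, star_trivial, hMS, Matrix.of_apply]
    exact intervalIntegral.integral_congr fun t ht => symmS t (hIcc ▸ ht) i j
  have hermMI : MI.IsHermitian := by
    show MIᴴ = MI
    ext i j
    simp only [Matrix.conjTranspose_apply, star_trivial, hMI, Matrix.of_apply]
    exact intervalIntegral.integral_congr fun t ht => symmInv t (hIcc ▸ ht) i j
  -- A is positive definite
  have hApd : (T⁻¹ • MS).PosDef := by
    refine PosDef.of_dotProduct_mulVec_pos ?_ ?_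
    · show (T⁻¹ • MS)ᴴ = T⁻¹ • MS
      rw [Matrix.conjTranspose_smul, star_trivial, hermMS.eq]
    · intro x hx
      have hdi : x ⬝ᵥ MS *ᵥ x = ∫ t in (0:ℝ)..T, x ⬝ᵥ (Sig t) *ᵥ x :=
        dot_integral T Sig hintS x x
      have hposint : 0 < ∫ t in (0:ℝ)..T, x ⬝ᵥ (Sig t) *ᵥ x := by
        refine intervalIntegral.intervalIntegral_pos_of_pos_on
          (hII _ (quad_contOn Sig _ hcont x x)) (fun t ht => ?_) hT
        have := (hpos t (Set.mem_Icc_of_Ioo ht)).dotProduct_mulVec_pos hx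
        simpa using this
      have : star x ⬝ᵥ (T⁻¹ • MS) *ᵥ x = T⁻¹ * (x ⬝ᵥ MS *ᵥ x) := by
        rw [star_trivial, Matrix.smul_mulVec, dotProduct_smul, smul_eq_mul]
      rw [this, hdi]
      positivity
  have hdetA : IsUnit (T⁻¹ • MS).det := (hApd.det_pos.ne').isUnit
  have hAinv : (T⁻¹ • MS)⁻¹.PosDef := hApd.inv
  have hermB : (T⁻¹ • MI).IsHermitian := by
    show (T⁻¹ • MI)ᴴ = T⁻¹ • MI
    rw [Matrix.conjTranspose_smul, star_trivial, hermMI.eq]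
  refine PosSemidef.of_dotProduct_mulVec_nonneg (hermB.sub hAinv.isHermitian) fun x => ?_
  rw [star_trivial]
  set z : Fin n → ℝ := (T⁻¹ • MS)⁻¹ *ᵥ x with hz
  have hAz : (T⁻¹ • MS) *ᵥ z = x := by
    rw [hz, Matrix.mulVec_mulVec, Matrix.mul_nonsing_inv _ hdetA, Matrix.one_mulVec]
  set c : ℝ := z ⬝ᵥ x with hc
  -- pointwise Jensen inequality
  have key : ∀ t ∈ Set.Icc (0:ℝ) T,
      2*c - z ⬝ᵥ Sig t *ᵥ z ≤ x ⬝ᵥ (Sig t)⁻¹ *ᵥ x := by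
    intro t ht
    have hS := hpos t ht
    have hdu : IsUnit (Sig t).det := (hS.det_pos.ne').isUnit
    have hSt : (Sig t)ᵀ = Sig t := by
      ext i j; rw [Matrix.transpose_apply]; exact symmS t ht i j
    have h0 : 0 ≤ ((Sig t)⁻¹ *ᵥ x - z) ⬝ᵥ Sig t *ᵥ ((Sig t)⁻¹ *ᵥ x - z) := by
      have := hS.posSemidef.dotProduct_mulVec_nonneg ((Sig t)⁻¹ *ᵥ x - z)
      simpa using this
    have e2 : Sig t *ᵥ ((Sig t)⁻¹ *ᵥ x - z) = x - Sig t *ᵥ z := by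
      rw [Matrix.mulVec_sub, Matrix.mulVec_mulVec, Matrix.mul_nonsing_inv _ hdu,
        Matrix.one_mulVec]
    have e3 : ((Sig t)⁻¹ *ᵥ x) ⬝ᵥ x = x ⬝ᵥ (Sig t)⁻¹ *ᵥ x := dotProduct_comm _ _
    have e4 : ((Sig t)⁻¹ *ᵥ x) ⬝ᵥ (Sig t *ᵥ z) = x ⬝ᵥ z := by
      rw [dotProduct_mulVec, ← Matrix.mulVec_transpose, hSt, Matrix.mulVec_mulVec,
        Matrix.mul_nonsing_inv _ hdu, Matrix.one_mulVec]
    have e5 : x ⬝ᵥ z = c := by rw [hc, dotProduct_comm]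
    rw [e2, sub_dotProduct, dotProduct_sub, dotProduct_sub,
      e3, e4, e5] at h0
    linarith [h0]
  -- integrate the pointwise inequality
  have hfint : IntervalIntegrable (fun t => x ⬝ᵥ (Sig t)⁻¹ *ᵥ x) volume 0 T :=
    hII _ (quad_contOn _ _ hcontInv x x)
  have hgint : IntervalIntegrable (fun t => 2*c - z ⬝ᵥ Sig t *ᵥ z) volume 0 T :=
    (intervalIntegrable_const).sub (hII _ (quad_contOn Sig _ hcont z z))
  have hmono := intervalIntegral.integral_mono_on hT.le hgint hfint key
  have hG : (∫ t in (0:ℝ)..T, z ⬝ᵥ Sig t *ᵥ z) = T * c := by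
    have h1 : z ⬝ᵥ MS *ᵥ z = ∫ t in (0:ℝ)..T, z ⬝ᵥ Sig t *ᵥ z :=
      dot_integral T Sig hintS z z
    have h2 : z ⬝ᵥ (T⁻¹ • MS) *ᵥ z = c := by rw [hAz]
    have h3 : z ⬝ᵥ (T⁻¹ • MS) *ᵥ z = T⁻¹ * (z ⬝ᵥ MS *ᵥ z) := by
      rw [Matrix.smul_mulVec, dotProduct_smul, smul_eq_mul]
    have h4 : T⁻¹ * (z ⬝ᵥ MS *ᵥ z) = c := by rw [← h3]; exact h2
    rw [← h1, ← h4]; field_simp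
  have hLHS : (∫ t in (0:ℝ)..T, 2*c - z ⬝ᵥ Sig t *ᵥ z) = T * c := by
    rw [intervalIntegral.integral_sub intervalIntegrable_const
      (hII _ (quad_contOn Sig _ hcont z z)), hG, intervalIntegral.integral_const]
    simp; ring
  have hF : T * c ≤ ∫ t in (0:ℝ)..T, x ⬝ᵥ (Sig t)⁻¹ *ᵥ x := hLHS ▸ hmono
  have hxBx : x ⬝ᵥ (T⁻¹ • MI) *ᵥ x = T⁻¹ * ∫ t in (0:ℝ)..T, x ⬝ᵥ (Sig t)⁻¹ *ᵥ x := by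
    rw [Matrix.smul_mulVec, dotProduct_smul, smul_eq_mul,
      dot_integral T (fun t => (Sig t)⁻¹) hintInv x x]
  have hxAx : x ⬝ᵥ (T⁻¹ • MS)⁻¹ *ᵥ x = c := by
    rw [← hz, hc, dotProduct_comm]
  rw [Matrix.sub_mulVec, dotProduct_sub, hxBx, hxAx, sub_nonneg]
  calc c = T⁻¹ * (T * c) := by field_simp
    _ ≤ T⁻¹ * ∫ t in (0:ℝ)..T, x ⬝ᵥ (Sig t)⁻¹ *ᵥ x :=
        mul_le_mul_of_nonneg_left hF (inv_pos.mpr hT).le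
end

section
/- Jensen's inequality for the quadratic matrix map under integration: if Q : [0,T] → Sⁿ is continuous with symmetric values and W is symmetric positive semidefinite, then ((1/T)∫₀ᵀ Q(t) dt) W ((1/T)∫₀ᵀ Q(t) dt) ⪯ (1/T)∫₀ᵀ Q(t) W Q(t) dt. -/
open Matrix

set_option maxHeartbeats 1000000 in
private lemma swap_quad {n : ℕ} {T : ℝ} (F : ℝ → Matrix (Fin n) (Fin n) ℝ)
    (hF : ∀ i j, IntervalIntegrable (fun t => F t i j) MeasureTheory.volume 0 T)
    (x : Fin n → ℝ) :
    x ⬝ᵥ ((Matrix.of fun i j => ∫ t in (0:ℝ)..T, F t i j) *ᵥ x)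
      = ∫ t in (0:ℝ)..T, x ⬝ᵥ (F t *ᵥ x) := by
  simp only [dotProduct, Matrix.mulVec, Matrix.of_apply]
  have h2 : ∀ i, (∑ j, (∫ t in (0:ℝ)..T, F t i j) * x j)
      = ∫ t in (0:ℝ)..T, ∑ j, F t i j * x j := by
    intro i
    have h := intervalIntegral.integral_finset_sum (μ := MeasureTheory.volume)
      (a := (0:ℝ)) (b := T) (s := Finset.univ)
      (f := fun j (t : ℝ) => F t i j * x j) (fun j _ => (hF i j).mul_const (x j))
    rw [h]
    exact Finset.sum_congr rfl fun j _ => (intervalIntegral.integral_mul_const _ _).symm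
  have h1 : ∀ i, x i * ∑ j, (∫ t in (0:ℝ)..T, F t i j) * x j
      = ∫ t in (0:ℝ)..T, x i * ∑ j, F t i j * x j := by
    intro i
    rw [h2 i, ← intervalIntegral.integral_const_mul]
  have hIsum : ∀ i, IntervalIntegrable (fun t : ℝ => x i * ∑ j, F t i j * x j)
      MeasureTheory.volume 0 T := by
    intro i
    have h : IntervalIntegrable (fun t : ℝ => ∑ j, F t i j * x j) MeasureTheory.volume 0 T := by
      have := IntervalIntegrable.sum (μ := MeasureTheory.volume) (a := (0:ℝ)) (b := T)
        Finset.univ (f := fun j (t : ℝ) => F t i j * x j) (fun j _ => (hF i j).mul_const (x j))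
      simpa [Finset.sum_fn] using this
    exact h.const_mul (x i)
  have h3 := intervalIntegral.integral_finset_sum (μ := MeasureTheory.volume)
    (a := (0:ℝ)) (b := T) (s := Finset.univ)
    (f := fun i (t : ℝ) => x i * ∑ j, F t i j * x j) (fun i _ => hIsum i)
  calc ∑ i, x i * ∑ j, (∫ t in (0:ℝ)..T, F t i j) * x j
      = ∑ i, ∫ t in (0:ℝ)..T, x i * ∑ j, F t i j * x j :=
        Finset.sum_congr rfl fun i _ => h1 i
    _ = ∫ t in (0:ℝ)..T, ∑ i, x i * ∑ j, F t i j * x j := h3.symm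

theorem jensen_quadratic_integral (n : ℕ) (T : ℝ) (hT : 0 < T)
    (Q : ℝ → Matrix (Fin n) (Fin n) ℝ) (W : Matrix (Fin n) (Fin n) ℝ)
    (hcont : ∀ i j, ContinuousOn (fun t => Q t i j) (Set.Icc 0 T))
    (hsym : ∀ t ∈ Set.Icc (0:ℝ) T, (Q t).IsSymm)
    (hW : W.PosSemidef) :
    ((T⁻¹ • (Matrix.of fun i j => ∫ t in (0:ℝ)..T, (Q t * W * Q t) i j))
      - (T⁻¹ • (Matrix.of fun i j => ∫ t in (0:ℝ)..T, Q t i j)) * W *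
        (T⁻¹ • (Matrix.of fun i j => ∫ t in (0:ℝ)..T, Q t i j))).PosSemidef := by
  have h0T : (0:ℝ) ≤ T := hT.le
  have hIcc : Set.uIcc (0:ℝ) T = Set.Icc 0 T := Set.uIcc_of_le h0T
  have hWsym : Wᵀ = W := by
    have := hW.1
    rwa [Matrix.IsHermitian, Matrix.conjTranspose_eq_transpose_of_trivial] at this
  -- integrability from continuity on [0,T]
  have hInt : ∀ f : ℝ → ℝ, ContinuousOn f (Set.Icc 0 T) →
      IntervalIntegrable f MeasureTheory.volume 0 T := by
    intro f hf
    exact ContinuousOn.intervalIntegrable (by rwa [hIcc])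
  have hcQWQ : ∀ i j, ContinuousOn (fun t => (Q t * W * Q t) i j) (Set.Icc 0 T) := by
    intro i j
    simp only [Matrix.mul_apply]
    refine continuousOn_finset_sum _ fun l _ => ContinuousOn.mul ?_ (hcont l j)
    exact continuousOn_finset_sum _ fun k _ => (hcont i k).mul continuousOn_const
  set A : Matrix (Fin n) (Fin n) ℝ :=
    T⁻¹ • (Matrix.of fun i j => ∫ t in (0:ℝ)..T, Q t i j) with hA
  have hAsym : Aᵀ = A := by
    ext i j
    simp only [hA, Matrix.transpose_apply, Matrix.smul_apply, Matrix.of_apply, smul_eq_mul]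
    congr 1
    refine intervalIntegral.integral_congr fun t ht => ?_
    rw [hIcc] at ht
    exact (congrFun (congrFun (hsym t ht) j) i).symm
  rw [Matrix.posSemidef_iff_dotProduct_mulVec]
  constructor
  · -- Hermitian
    rw [Matrix.IsHermitian, Matrix.conjTranspose_eq_transpose_of_trivial,
      Matrix.transpose_sub, Matrix.transpose_mul, Matrix.transpose_mul, hWsym, hAsym]
    congr 1
    · ext i j
      simp only [Matrix.transpose_apply, Matrix.smul_apply, Matrix.of_apply, smul_eq_mul]
      congr 1
      refine intervalIntegral.integral_congr fun t ht => ?_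
      rw [hIcc] at ht
      have hq : (Q t)ᵀ = Q t := hsym t ht
      have : (Q t * W * Q t)ᵀ = Q t * W * Q t := by
        rw [Matrix.transpose_mul, Matrix.transpose_mul, hq, hWsym, mul_assoc]
      exact (congrFun (congrFun this j) i).symm
    · simp [Matrix.mul_assoc]
  · intro x
    rw [star_trivial]
    set u : ℝ → Fin n → ℝ := fun t => Q t *ᵥ x with hu
    have hcu : ∀ i, ContinuousOn (fun t => u t i) (Set.Icc 0 T) := by
      intro i
      simp only [hu, Matrix.mulVec, dotProduct]
      exact continuousOn_finset_sum _ fun j _ => (hcont i j).mul continuousOn_const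
    set v : Fin n → ℝ := A *ᵥ x with hv
    have hvT : ∀ i, T * v i = ∫ t in (0:ℝ)..T, u t i := by
      intro i
      simp only [hv, hA, Matrix.smul_mulVec, Pi.smul_apply, smul_eq_mul,
        ← mul_assoc, mul_inv_cancel₀ hT.ne', one_mul]
      simp only [Matrix.mulVec, dotProduct, Matrix.of_apply, hu]
      rw [intervalIntegral.integral_finset_sum fun j _ => (hInt _ (hcont i j)).mul_const (x j)]
      exact Finset.sum_congr rfl fun j _ => (intervalIntegral.integral_mul_const _ _).symm
    -- quadratic forms via W
    have hdotW : ∀ w z : Fin n → ℝ, z ⬝ᵥ W *ᵥ w = w ⬝ᵥ W *ᵥ z := by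
      intro w z
      rw [Matrix.dotProduct_mulVec, ← Matrix.mulVec_transpose, hWsym, dotProduct_comm]
    -- first key rewrite: quadratic form of A*W*A
    have hAq : x ⬝ᵥ ((A * W * A) *ᵥ x) = v ⬝ᵥ W *ᵥ v := by
      rw [← Matrix.mulVec_mulVec, ← Matrix.mulVec_mulVec, Matrix.dotProduct_mulVec,
        ← Matrix.mulVec_transpose, hAsym, ← hv]
    -- second: integral quadratic form
    have hIq : x ⬝ᵥ ((Matrix.of fun i j => ∫ t in (0:ℝ)..T, (Q t * W * Q t) i j) *ᵥ x)
        = ∫ t in (0:ℝ)..T, u t ⬝ᵥ W *ᵥ u t := by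
      rw [swap_quad _ (fun i j => hInt _ (hcQWQ i j))]
      refine intervalIntegral.integral_congr fun t ht => ?_
      rw [hIcc] at ht
      rw [← Matrix.mulVec_mulVec, ← Matrix.mulVec_mulVec, Matrix.dotProduct_mulVec,
        ← Matrix.mulVec_transpose, hsym t ht]
    -- integrability facts
    have hIuWu : IntervalIntegrable (fun t => u t ⬝ᵥ W *ᵥ u t) MeasureTheory.volume 0 T := by
      refine hInt _ ?_
      simp only [dotProduct, Matrix.mulVec]
      refine continuousOn_finset_sum _ fun i _ => (hcu i).mul ?_
      exact continuousOn_finset_sum _ fun j _ => continuousOn_const.mul (hcu j)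
    have hIuWv : IntervalIntegrable (fun t => u t ⬝ᵥ W *ᵥ v) MeasureTheory.volume 0 T := by
      refine hInt _ ?_
      simp only [dotProduct]
      exact continuousOn_finset_sum _ fun i _ => (hcu i).mul continuousOn_const
    have hintuWv : (∫ t in (0:ℝ)..T, u t ⬝ᵥ W *ᵥ v) = T * (v ⬝ᵥ W *ᵥ v) := by
      simp only [dotProduct]
      rw [intervalIntegral.integral_finset_sum
        fun i _ => ((hInt _ (hcu i)).mul_const ((W *ᵥ v) i)), Finset.mul_sum]
      refine Finset.sum_congr rfl fun i _ => ?_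
      rw [intervalIntegral.integral_mul_const, ← mul_assoc, hvT i]
    -- variance nonnegativity
    have hvar : 0 ≤ ∫ t in (0:ℝ)..T, (u t - v) ⬝ᵥ W *ᵥ (u t - v) := by
      refine intervalIntegral.integral_nonneg h0T fun t _ => ?_
      simpa using hW.dotProduct_mulVec_nonneg (u t - v)
    have hexp : (∫ t in (0:ℝ)..T, (u t - v) ⬝ᵥ W *ᵥ (u t - v))
        = (∫ t in (0:ℝ)..T, u t ⬝ᵥ W *ᵥ u t) - T * (v ⬝ᵥ W *ᵥ v) := by
      have heq : ∀ t, (u t - v) ⬝ᵥ W *ᵥ (u t - v)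
          = (u t ⬝ᵥ W *ᵥ u t) - 2 * (u t ⬝ᵥ W *ᵥ v) + (v ⬝ᵥ W *ᵥ v) := by
        intro t
        have h1 := hdotW (u t) v
        simp only [sub_dotProduct, dotProduct_sub, Matrix.mulVec_sub]
        rw [h1]; ring
      simp only [heq]
      rw [intervalIntegral.integral_add (hIuWu.sub (hIuWv.const_mul 2))
          intervalIntegrable_const,
        intervalIntegral.integral_sub hIuWu (hIuWv.const_mul 2),
        intervalIntegral.integral_const_mul, hintuWv, intervalIntegral.integral_const,
        sub_zero, smul_eq_mul]
      ring
    -- conclude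
    rw [Matrix.sub_mulVec, dotProduct_sub, Matrix.smul_mulVec,
      dotProduct_smul, smul_eq_mul, hIq, hAq, sub_nonneg]
    rw [hexp] at hvar
    have h2 : T * (v ⬝ᵥ W *ᵥ v) ≤ ∫ t in (0:ℝ)..T, u t ⬝ᵥ W *ᵥ u t := by linarith
    calc v ⬝ᵥ W *ᵥ v = T⁻¹ * (T * (v ⬝ᵥ W *ᵥ v)) := by
          rw [← mul_assoc, inv_mul_cancel₀ hT.ne', one_mul]
      _ ≤ T⁻¹ * ∫ t in (0:ℝ)..T, u t ⬝ᵥ W *ᵥ u t := by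
          exact mul_le_mul_of_nonneg_left h2 (inv_nonneg.mpr h0T)
end

section
/- For A < 0, W > 0, V > 0, C ≠ 0, the equilibrium x_e = -W/(2A) of the Lyapunov equation 2Ax + W = 0 is strictly positive and satisfies x_e > x₂, where x₂ = (A + √(A² + C²W/V))/(C²/V) is the positive root of 2Ax + W - (C²/V)x² = 0. -/
theorem lyapunov_equilibrium_above_x2 (A W C V : ℝ) (hA : A < 0) (hW : 0 < W)
    (hV : 0 < V) (hC : C ≠ 0) :
    let xe := -W / (2*A)
    let x₂ := (A + Real.sqrt (A^2 + C^2 * W / V)) / (C^2 / V)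
    2*A*xe + W = 0 ∧ 0 < xe ∧ x₂ < xe := by
  intro xe x₂
  have hA2 : (2*A) ≠ 0 := by linarith
  have hk : 0 < C^2 / V := div_pos (by positivity) hV
  have hxe : 0 < xe := div_pos_of_neg_of_neg (by linarith) (by linarith)
  have heq : 2*A*xe + W = 0 := by
    show 2*A*(-W/(2*A)) + W = 0
    field_simp [hA.ne]
    ring
  refine ⟨heq, hxe, ?_⟩
  set s := Real.sqrt (A^2 + C^2 * W / V) with hs
  have harg : (0:ℝ) ≤ A^2 + C^2 * W / V := by positivity
  have hs2 : s^2 = A^2 + C^2 * W / V := Real.sq_sqrt harg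
  have hsnn : 0 ≤ s := Real.sqrt_nonneg _
  have hR : 0 < xe * (C^2/V) - A := by nlinarith
  have hlt : s < xe * (C^2/V) - A := by
    have key : (xe*(C^2/V) - A)^2 - s^2 = (xe*(C^2/V))^2 := by
      rw [hs2]; show ((-W/(2*A))*(C^2/V) - A)^2 - _ = ((-W/(2*A))*(C^2/V))^2; field_simp [hA.ne]; ring
    have hxk : 0 < (xe*(C^2/V))^2 := by positivity
    nlinarith
  show (A + s) / (C^2/V) < xe
  rw [div_lt_iff₀ hk]
  linarith
end

section
/- Let A, W, C, V, T, κ be reals with T > 0, W > 0, V > 0, C ≠ 0, and let x₂ = (A + √(A² + C²W/V))/(C²/V). Then the function Σ ↦ -κ + (C²/(2V)) · TΣ³/(AΣ + W) is strictly increasing on the interval (x₂, -W/(2A)) when A < 0, and on (x₂, ∞) when A ≥ 0. -/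
theorem whittle_index_case2_monotone (A W C V T κ : ℝ) (hT : 0 < T) (hW : 0 < W)
    (hV : 0 < V) (hC : C ≠ 0) :
    let x₂ := (A + Real.sqrt (A^2 + C^2 * W / V)) / (C^2 / V)
    let f := fun Sig : ℝ => -κ + (C^2 / (2*V)) * (T * Sig^3 / (A * Sig + W))
    (A < 0 → StrictMonoOn f (Set.Ioo x₂ (-W/(2*A)))) ∧
    (0 ≤ A → StrictMonoOn f (Set.Ioi x₂)) := by
  intro x₂ f
  have hC2 : (0:ℝ) < C^2 := by positivity
  have hx₂pos : 0 < x₂ := by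
    apply div_pos _ (by positivity)
    have h1 : Real.sqrt (A^2) < Real.sqrt (A^2 + C^2*W/V) := by
      apply Real.sqrt_lt_sqrt (by positivity)
      have : 0 < C^2*W/V := by positivity
      linarith
    rw [Real.sqrt_sq_eq_abs] at h1
    have h2 := neg_abs_le A
    linarith
  have key : ∀ x : ℝ, A*x+W ≠ 0 →
      HasDerivAt f (C^2/(2*V) * ((T*(3*x^2)*(A*x+W) - (T*x^3)*A)/(A*x+W)^2)) x := by
    intro x hden
    have h1 : HasDerivAt (fun y : ℝ => T*y^3) (T*(3*x^2)) x := by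
      simpa using ((hasDerivAt_pow 3 x).const_mul T)
    have h2' : HasDerivAt (fun y : ℝ => A*y+W) A x := by
      simpa using ((hasDerivAt_id x).const_mul A).add_const W
    have hdiv := h1.div h2' hden
    exact (hdiv.const_mul (C^2/(2*V))).const_add (-κ)
  have keypos : ∀ x : ℝ, 0 < x → 0 < 2*A*x + 3*W → 0 < A*x+W →
      0 < deriv f x := by
    intro x hx h2 hden
    rw [(key x (ne_of_gt hden)).deriv]
    have hnum : T*(3*x^2)*(A*x+W) - (T*x^3)*A = T*x^2*(2*A*x+3*W) := by ring
    rw [hnum]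
    positivity
  have hcont : ∀ s : Set ℝ, (∀ x ∈ s, A*x+W ≠ 0) → ContinuousOn f s := by
    intro s hs
    apply ContinuousOn.add continuousOn_const
    apply ContinuousOn.mul continuousOn_const
    exact ContinuousOn.div (by fun_prop) (by fun_prop) hs
  constructor
  · intro hA
    have hmem : ∀ x ∈ Set.Ioo x₂ (-W/(2*A)), 0 < A*x+W ∧ 0 < 2*A*x+3*W := by
      intro x hx
      obtain ⟨hx1, hx2⟩ := hx
      have h2A : 2*A < 0 := by linarith
      have hm := mul_lt_mul_of_neg_left hx2 h2A
      have heq : 2*A*(-W/(2*A)) = -W := mul_div_cancel₀ (-W) (ne_of_lt h2A)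
      have : 2*A*x > -W := by rw [heq] at hm; linarith
      constructor <;> linarith
    apply StrictMonoOn.mono (s := Set.Ioo x₂ (-W/(2*A)))
    · apply strictMonoOn_of_deriv_pos (convex_Ioo _ _)
      · exact hcont _ (fun x hx => ne_of_gt (hmem x hx).1)
      · intro x hx
        rw [interior_Ioo] at hx
        exact keypos x (lt_trans hx₂pos hx.1) (hmem x hx).2 (hmem x hx).1
    · exact le_refl _
  · intro hA
    have hmem : ∀ x ∈ Set.Ioi x₂, 0 < A*x+W ∧ 0 < 2*A*x+3*W := by
      intro x hx
      have hxpos : 0 < x := lt_trans hx₂pos hx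
      constructor <;> nlinarith
    apply strictMonoOn_of_deriv_pos (convex_Ioi _)
    · exact hcont _ (fun x hx => ne_of_gt (hmem x hx).1)
    · intro x hx
      rw [interior_Ioi] at hx
      exact keypos x (lt_trans hx₂pos hx) (hmem x hx).2 (hmem x hx).1
end

section
/- Let A, W, C, V be reals with W > 0, V > 0, C ≠ 0, and let x₂ be the positive root of 2Ax + W - (C²/V)x² = 0. If Σ(t) solves Σ' = 2AΣ + W - (C²/V)Σ², Σ(0) = Σ₀ > 0, then Σ(t) → x₂ as t → ∞. -/
open Real Filter MeasureTheory Set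

/-- A function satisfying `u' = k(t) u` on `[0,∞)` with continuous `k` equals
`u 0 * exp (∫₀ᵗ k)`. -/
lemma lin_ode_exp (k u : ℝ → ℝ) (hk : Continuous k)
    (hu : ∀ t, 0 ≤ t → HasDerivAt u (k t * u t) t) :
    ∀ t, 0 ≤ t → u t = u 0 * Real.exp (∫ s in (0:ℝ)..t, k s) := by
  intro T hT
  set K : ℝ → ℝ := fun t => ∫ s in (0:ℝ)..t, k s with hKdef
  have hKd : ∀ t : ℝ, HasDerivAt K (k t) t := fun t =>
    intervalIntegral.integral_hasDerivAt_right (hk.intervalIntegrable 0 t)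
      (hk.stronglyMeasurableAtFilter _ _) hk.continuousAt
  set F : ℝ → ℝ := fun t => u t * Real.exp (-K t) with hFdef
  have hFd : ∀ t, 0 ≤ t → HasDerivAt F 0 t := by
    intro t ht
    have h1 : HasDerivAt (fun t => Real.exp (-K t)) (Real.exp (-K t) * -(k t)) t :=
      ((hKd t).neg).exp
    have h2 : HasDerivAt F (k t * u t * Real.exp (-K t) + u t * (Real.exp (-K t) * -(k t))) t := (hu t ht).mul h1
    convert h2 using 1
    ring
  have hconst : F T = F 0 := by
    have := constant_of_has_deriv_right_zero (f := F) (a := 0) (b := T)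
      (fun x hx => ((hFd x hx.1).continuousAt).continuousWithinAt)
      (fun x hx => (hFd x hx.1).hasDerivWithinAt)
    exact this T ⟨hT, le_rfl⟩
  have hK0 : K 0 = 0 := intervalIntegral.integral_same
  have h3 : u T * Real.exp (-K T) = u 0 := by
    simpa [hFdef, hK0] using hconst
  have hpos : (0:ℝ) < Real.exp (K T) := Real.exp_pos _
  rw [Real.exp_neg] at h3
  have : u T = u 0 * Real.exp (K T) := by
    field_simp at h3
    linarith [h3]
  exact this

theorem scalar_riccati_convergence (A W C V Sig0 : ℝ) (hW : 0 < W) (hV : 0 < V)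
    (hC : C ≠ 0) (hSig0 : 0 < Sig0) (Sig : ℝ → ℝ) (h0 : Sig 0 = Sig0)
    (hode : ∀ t, 0 ≤ t → HasDerivAt Sig (2*A*Sig t + W - (C^2/V) * (Sig t)^2) t) :
    Filter.Tendsto Sig Filter.atTop
      (nhds ((A + Real.sqrt (A^2 + C^2 * W / V)) / (C^2 / V))) := by
  set b : ℝ := C^2/V with hbdef
  have hb : 0 < b := by rw [hbdef]; positivity
  set s : ℝ := Real.sqrt (A^2 + C^2 * W / V) with hsdef
  have hs2 : s^2 = A^2 + b*W := by
    rw [hsdef, sq, Real.mul_self_sqrt (by positivity), hbdef]; ring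
  have hsA : |A| < s := by
    rw [hsdef, ← Real.sqrt_sq_eq_abs]
    have hC2 : (0:ℝ) < C^2 := by rw [← sq_abs]; exact pow_pos (abs_pos.mpr hC) 2
    have hpos : (0:ℝ) < C^2 * W / V := by positivity
    exact Real.sqrt_lt_sqrt (sq_nonneg A) (by linarith)
  set x₁ : ℝ := (A - s)/b with hx₁def
  set x₂ : ℝ := (A + s)/b with hx₂def
  have hAle : A ≤ |A| := le_abs_self A
  have hAge : -A ≤ |A| := neg_le_abs A
  have hx₁ : x₁ < 0 := div_neg_of_neg_of_pos (by linarith) hb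
  have hx₂ : 0 < x₂ := div_pos (by linarith) hb
  have hbx₁ : b * x₁ = A - s := by rw [hx₁def]; field_simp
  have hbx₂ : b * x₂ = A + s := by rw [hx₂def]; field_simp
  have hfac : ∀ x : ℝ, 2*A*x + W - b*x^2 = (-b*(x - x₁))*(x - x₂) := by
    intro x
    have hbne : b ≠ 0 := hb.ne'
    apply mul_left_cancel₀ hbne
    have e1 : b * x₁ - (A - s) = 0 := by rw [hbx₁]; ring
    have e2 : b * x₂ - (A + s) = 0 := by rw [hbx₂]; ring
    have e3 : s^2 - A^2 - b*W = 0 := by rw [hs2]; ring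
    linear_combination (b*x₂ - b*x) * hbx₁ + ((A - s) - b*x) * hbx₂ - hs2
  -- continuity of Sig on [0,∞), extended by max
  have hSigCont : ∀ t, 0 ≤ t → ContinuousAt Sig t := fun t ht => (hode t ht).continuousAt
  have hSigOn : ContinuousOn Sig (Ici 0) := fun t ht => (hSigCont t ht).continuousWithinAt
  set Sm : ℝ → ℝ := fun t => Sig (max t 0) with hSmdef
  have hmax : Continuous (fun t : ℝ => max t 0) := continuous_id.max continuous_const
  have hSm : Continuous Sm := by
    rw [← continuousOn_univ]
    exact hSigOn.comp hmax.continuousOn (fun x _ => le_max_right x 0)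
  have hSmEq : ∀ t, 0 ≤ t → Sm t = Sig t := fun t ht => by
    simp [hSmdef, max_eq_left ht]
  set k₂ : ℝ → ℝ := fun t => -b * (Sm t - x₁) with hk₂def
  set k₁ : ℝ → ℝ := fun t => -b * (Sm t - x₂) with hk₁def
  have hk₂c : Continuous k₂ := by fun_prop
  have hk₁c : Continuous k₁ := by fun_prop
  have hg : ∀ t, 0 ≤ t → Sig t - x₂ = (Sig0 - x₂) * Real.exp (∫ s in (0:ℝ)..t, k₂ s) := by
    have h := lin_ode_exp k₂ (fun t => Sig t - x₂) hk₂c (by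
      intro t ht
      have hd := (hode t ht).sub_const x₂
      have heq : 2*A*Sig t + W - b * (Sig t)^2 = k₂ t * (Sig t - x₂) := by
        rw [hfac (Sig t), hk₂def]
        simp only [hSmEq t ht]
        try ring
      rwa [heq] at hd)
    intro t ht
    simpa [h0] using h t ht
  have hh : ∀ t, 0 ≤ t → Sig t - x₁ = (Sig0 - x₁) * Real.exp (∫ s in (0:ℝ)..t, k₁ s) := by
    have h := lin_ode_exp k₁ (fun t => Sig t - x₁) hk₁c (by
      intro t ht
      have hd := (hode t ht).sub_const x₁
      have heq : 2*A*Sig t + W - b * (Sig t)^2 = k₁ t * (Sig t - x₁) := by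
        rw [hfac (Sig t), hk₁def]
        simp only [hSmEq t ht]
        try ring
      rwa [heq] at hd)
    intro t ht
    simpa [h0] using h t ht
  set m : ℝ := min Sig0 x₂ with hmdef
  have hm : 0 < m := lt_min hSig0 hx₂
  have hlow : ∀ t, 0 ≤ t → m ≤ Sig t := by
    rcases le_or_gt Sig0 x₂ with hcase | hcase
    · have hle : ∀ t, 0 ≤ t → Sig t ≤ x₂ := by
        intro t ht
        have h1 := hg t ht
        nlinarith [Real.exp_pos (∫ s in (0:ℝ)..t, k₂ s)]
      intro t ht
      have hint : 0 ≤ ∫ s in (0:ℝ)..t, k₁ s := by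
        apply intervalIntegral.integral_nonneg ht
        intro u hu
        have h1 : Sm u ≤ x₂ := by
          rw [hSmdef]
          exact hle (max u 0) (le_max_right u 0)
        simp only [hk₁def]
        nlinarith
      have hE : 1 ≤ Real.exp (∫ s in (0:ℝ)..t, k₁ s) := Real.one_le_exp hint
      have h2 := hh t ht
      have h3 : Sig0 - x₁ ≤ Sig t - x₁ := by
        rw [h2]
        nlinarith
      calc m ≤ Sig0 := min_le_left _ _
        _ ≤ Sig t := by linarith
    · intro t ht
      have h1 := hg t ht
      have h2 : 0 < Sig t - x₂ := by
        rw [h1]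
        exact mul_pos (by linarith) (Real.exp_pos _)
      calc m ≤ x₂ := min_le_right _ _
        _ ≤ Sig t := by linarith
  set c : ℝ := b * (m - x₁) with hcdef
  have hc : 0 < c := mul_pos hb (by linarith)
  have hintle : ∀ t, 0 ≤ t → (∫ s in (0:ℝ)..t, k₂ s) ≤ -c * t := by
    intro t ht
    have h1 : (∫ s in (0:ℝ)..t, k₂ s) ≤ ∫ _ in (0:ℝ)..t, (-c) := by
      apply intervalIntegral.integral_mono_on ht (hk₂c.intervalIntegrable 0 t)
        intervalIntegrable_const
      intro u hu
      have h2 : m ≤ Sm u := by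
        rw [hSmdef]
        exact hlow (max u 0) (le_max_right u 0)
      simp only [hk₂def, hcdef]
      nlinarith
    exact h1.trans_eq (by rw [intervalIntegral.integral_const, smul_eq_mul]; ring)
  have habs : ∀ t, 0 ≤ t → |Sig t - x₂| ≤ |Sig0 - x₂| * Real.exp (-c * t) := by
    intro t ht
    rw [hg t ht, abs_mul, Real.abs_exp]
    exact mul_le_mul_of_nonneg_left (Real.exp_le_exp.mpr (hintle t ht)) (abs_nonneg _)
  have hdecay : Tendsto (fun t => |Sig0 - x₂| * Real.exp (-c * t)) atTop (nhds 0) := by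
    have h1 : Tendsto (fun t : ℝ => -c * t) atTop atBot := by
      have := tendsto_id.const_mul_atTop hc (f := fun t : ℝ => t)
      have h2 := tendsto_neg_atTop_atBot.comp this
      convert h2 using 2 with t
      simp
    have h3 : Tendsto (fun t : ℝ => Real.exp (-c * t)) atTop (nhds 0) :=
      Real.tendsto_exp_atBot.comp h1
    simpa using tendsto_const_nhds.mul h3
  have hzero : Tendsto (fun t => |Sig t - x₂|) atTop (nhds 0) := by
    apply squeeze_zero' (Eventually.of_forall fun t => abs_nonneg _) _ hdecay
    filter_upwards [eventually_ge_atTop (0:ℝ)] with t ht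
    exact habs t ht
  rw [tendsto_iff_dist_tendsto_zero]
  simpa [Real.dist_eq] using hzero
end

section
/- The set of n×n doubly substochastic matrices is the convex hull of the set of n×n matrices with entries in {0,1} having at most one 1 in each row and at most one 1 in each column (Mirsky's theorem). -/
open Matrix

theorem mirsky_substochastic_convex_hull (n : ℕ) :
    {P : Matrix (Fin n) (Fin n) ℝ |
        (∀ i j, 0 ≤ P i j) ∧ (∀ i, ∑ j, P i j ≤ 1) ∧ (∀ j, ∑ i, P i j ≤ 1)} =
      convexHull ℝ
        {P : Matrix (Fin n) (Fin n) ℝ |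
          (∀ i j, P i j = 0 ∨ P i j = 1) ∧
          (∀ i, ∑ j, P i j ≤ 1) ∧ (∀ j, ∑ i, P i j ≤ 1)} := by
  set T : Set (Matrix (Fin n) (Fin n) ℝ) :=
    {P | (∀ i j, P i j = 0 ∨ P i j = 1) ∧ (∀ i, ∑ j, P i j ≤ 1) ∧ (∀ j, ∑ i, P i j ≤ 1)}
  set S : Set (Matrix (Fin n) (Fin n) ℝ) :=
    {P | (∀ i j, 0 ≤ P i j) ∧ (∀ i, ∑ j, P i j ≤ 1) ∧ (∀ j, ∑ i, P i j ≤ 1)}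
  have hSconv : Convex ℝ S := by
    rintro x ⟨hx0, hxr, hxc⟩ y ⟨hy0, hyr, hyc⟩ a b ha hb hab
    refine ⟨fun i j => ?_, fun i => ?_, fun j => ?_⟩
    · have : (a • x + b • y) i j = a * x i j + b * y i j := rfl
      rw [this]
      exact add_nonneg (mul_nonneg ha (hx0 i j)) (mul_nonneg hb (hy0 i j))
    · have : ∑ j, (a • x + b • y) i j = a * ∑ j, x i j + b * ∑ j, y i j := by
        simp [Finset.mul_sum, Finset.sum_add_distrib]
      rw [this]
      calc a * ∑ j, x i j + b * ∑ j, y i j ≤ a * 1 + b * 1 := by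
            gcongr <;> [exact hxr i; exact hyr i]
        _ = 1 := by linarith
    · have : ∑ i, (a • x + b • y) i j = a * ∑ i, x i j + b * ∑ i, y i j := by
        simp [Finset.mul_sum, Finset.sum_add_distrib]
      rw [this]
      calc a * ∑ i, x i j + b * ∑ i, y i j ≤ a * 1 + b * 1 := by
            gcongr <;> [exact hxc j; exact hyc j]
        _ = 1 := by linarith
  apply le_antisymm
  · -- hard direction
    intro P hP
    obtain ⟨hP0, hPr, hPc⟩ := hP
    -- build doubly stochastic dilation
    set Q : Matrix (Fin n ⊕ Fin n) (Fin n ⊕ Fin n) ℝ :=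
      Matrix.of (fun x y =>
        match x, y with
        | Sum.inl i, Sum.inl j => P i j
        | Sum.inl i, Sum.inr j => if i = j then 1 - ∑ k, P i k else 0
        | Sum.inr i, Sum.inl j => if i = j then 1 - ∑ k, P k j else 0
        | Sum.inr i, Sum.inr j => P j i) with hQ
    have hQmem : Q ∈ doublyStochastic ℝ (Fin n ⊕ Fin n) := by
      rw [mem_doublyStochastic_iff_sum]
      refine ⟨?_, ?_, ?_⟩
      · rintro (i | i) (j | j) <;> simp only [hQ, Matrix.of_apply]
        · exact hP0 i j
        · split
          · linarith [hPr i]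
          · exact le_refl 0
        · split
          · linarith [hPc j]
          · exact le_refl 0
        · exact hP0 j i
      · rintro (i | i) <;>
          simp only [Fintype.sum_sum_type, hQ, Matrix.of_apply, Finset.sum_ite_eq,
            Finset.mem_univ, if_true] <;> ring
      · rintro (j | j) <;>
          simp only [Fintype.sum_sum_type, hQ, Matrix.of_apply, Finset.sum_ite_eq',
            Finset.mem_univ, if_true] <;> ring
    rw [← SetLike.mem_coe, doublyStochastic_eq_convexHull_permMatrix] at hQmem
    -- project back
    have hlin : IsLinearMap ℝ (fun M : Matrix (Fin n ⊕ Fin n) (Fin n ⊕ Fin n) ℝ =>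
        Matrix.of (fun i j : Fin n => M (Sum.inl i) (Sum.inl j))) := by
      constructor <;> intros <;> rfl
    have himg := hlin.image_convexHull {σ.permMatrix ℝ | σ : Equiv.Perm (Fin n ⊕ Fin n)}
    have hPmem : P ∈ (fun M : Matrix (Fin n ⊕ Fin n) (Fin n ⊕ Fin n) ℝ =>
        Matrix.of (fun i j : Fin n => M (Sum.inl i) (Sum.inl j))) ''
        (convexHull ℝ {σ.permMatrix ℝ | σ : Equiv.Perm (Fin n ⊕ Fin n)}) := by
      exact ⟨Q, hQmem, rfl⟩
    rw [himg] at hPmem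
    refine convexHull_mono ?_ hPmem
    rintro _ ⟨_, ⟨σ, rfl⟩, rfl⟩
    have hds := permMatrix_mem_doublyStochastic (R := ℝ) (σ := σ)
    rw [mem_doublyStochastic_iff_sum] at hds
    obtain ⟨h0, hr, hc⟩ := hds
    refine ⟨fun i j => ?_, fun i => ?_, fun j => ?_⟩
    · simp only [Matrix.of_apply, Equiv.Perm.permMatrix, PEquiv.toMatrix_apply]
      split <;> simp
    · have := hr (Sum.inl i)
      rw [Fintype.sum_sum_type] at this
      have h2 : 0 ≤ ∑ j, σ.permMatrix ℝ (Sum.inl i) (Sum.inr j) :=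
        Finset.sum_nonneg fun j _ => h0 _ _
      simp only [Matrix.of_apply]
      linarith
    · have := hc (Sum.inl j)
      rw [Fintype.sum_sum_type] at this
      have h2 : 0 ≤ ∑ i, σ.permMatrix ℝ (Sum.inr i) (Sum.inl j) :=
        Finset.sum_nonneg fun i _ => h0 _ _
      simp only [Matrix.of_apply]
      linarith
  · refine convexHull_min ?_ hSconv
    rintro P ⟨h01, hr, hc⟩
    exact ⟨fun i j => by rcases h01 i j with h | h <;> simp [h], hr, hc⟩
end
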